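/- Let R be a commutative ring, L a Lie algebra over R, N ∈ ℕ, and (V i)_{i ∈ ℤ} a family of submodules of L such that ⨆_i V i = L, ⁅V i, V j⁆ ⊆ V (i+j) for all i, j ∈ ℤ, and V i = 0 whenever |i| > N. Then for every X ∈ ⨆_{i ≥ 1} V i, the adjoint endomorphism ad X : L → L, Y ↦ ⁅X,Y⁆, is nilpotent. -/

import Mathlib

/-- In a Lie algebra with a finite grading by submodules `(V i)_{i ∈ ℤ}` (so `⨆ i, V i = L`,
`⁅V i, V j⁆ ⊆ V (i+j)`, and `V i = 0` for `|i| > N`), the adjoint endomorphism `ad X` is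
nilpotent for every `X` in the positive part `⨆_{i ≥ 1} V i`. -/
theorem sard_graded_ad_nilpotent (R : Type*) [CommRing R] (L : Type*) [LieRing L]
    [LieAlgebra R L] (N : ℕ) (V : ℤ → Submodule R L)
    (hsup : ⨆ i : ℤ, V i = ⊤)
    (hbr : ∀ i j : ℤ, ∀ x ∈ V i, ∀ y ∈ V j, ⁅x, y⁆ ∈ V (i + j))
    (hbd : ∀ i : ℤ, (N : ℤ) < |i| → V i = ⊥) :
    ∀ X ∈ ⨆ i ∈ {i : ℤ | 1 ≤ i}, V i, IsNilpotent (LieAlgebra.ad R L X) := by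
  intro X hX
  set W : ℤ → Submodule R L := fun k => ⨆ i : {i : ℤ // k ≤ i}, V i.1 with hWdef
  have hXW : X ∈ W 1 := by
    have : (⨆ i ∈ {i : ℤ | 1 ≤ i}, V i) = W 1 := by
      rw [hWdef]; exact iSup_subtype'
    rwa [this] at hX
  -- step lemma
  have hstep : ∀ k : ℤ, ∀ y ∈ W k, ⁅X, y⁆ ∈ W (k + 1) := by
    intro k y hy
    refine Submodule.iSup_induction (motive := fun z => ⁅z, y⁆ ∈ W (k + 1)) _ hXW ?_ ?_ ?_
    · rintro ⟨i, hi⟩ z hz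
      refine Submodule.iSup_induction (motive := fun w => ⁅z, w⁆ ∈ W (k + 1)) _ hy ?_ ?_ ?_
      · rintro ⟨j, hj⟩ w hw
        have hmem : ⁅z, w⁆ ∈ V (i + j) := hbr i j z hz w hw
        have : k + 1 ≤ i + j := by omega
        exact le_iSup (fun i : {i : ℤ // k + 1 ≤ i} => V i.1) ⟨i + j, this⟩ hmem
      · simp
      · intro a b ha hb
        rw [lie_add]; exact Submodule.add_mem _ ha hb
    · simp
    · intro a b ha hb
      rw [add_lie]; exact Submodule.add_mem _ ha hb
  have hiter : ∀ n : ℕ, ∀ k : ℤ, ∀ y ∈ W k,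
      ((LieAlgebra.ad R L X) ^ n) y ∈ W (k + n) := by
    intro n
    induction n with
    | zero => intro k y hy; simpa using hy
    | succ m ih =>
      intro k y hy
      have h1 : ((LieAlgebra.ad R L X) ^ m) y ∈ W (k + m) := ih k y hy
      have h2 := hstep (k + m) _ h1
      have : ((LieAlgebra.ad R L X) ^ (m + 1)) y
          = ⁅X, ((LieAlgebra.ad R L X) ^ m) y⁆ := by
        rw [pow_succ']; rfl
      rw [this]
      convert h2 using 2
      push_cast
      ring
  have hWtop : W (-(N : ℤ)) = ⊤ := by
    rw [← hsup]
    apply le_antisymm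
    · exact iSup_le fun i => le_iSup V i.1
    · refine iSup_le fun i => ?_
      by_cases h : -(N : ℤ) ≤ i
      · exact le_iSup (fun i : {i : ℤ // -(N : ℤ) ≤ i} => V i.1) ⟨i, h⟩
      · rw [hbd i (by rw [lt_abs]; omega)]; exact bot_le
  have hWbot : W ((N : ℤ) + 1) = ⊥ := by
    apply le_antisymm _ bot_le
    refine iSup_le fun i => ?_
    rw [hbd i.1 (by have := i.2; rw [lt_abs]; omega)]
  refine ⟨2 * N + 1, ?_⟩
  ext y
  have hy : y ∈ W (-(N : ℤ)) := by rw [hWtop]; trivial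
  have := hiter (2 * N + 1) _ y hy
  have heq : (-(N : ℤ) + (2 * N + 1 : ℕ)) = (N : ℤ) + 1 := by push_cast; ring
  rw [heq, hWbot, Submodule.mem_bot] at this
  simpa using this
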